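/- Let 0≤n≤m≤N be integers, let f_1∈V_{h,m} satisfy either m=0 or L_m f_1=0, and let f_2∈V_{h,n} satisfy either n=0 or L_n f_2=0. Then ⟨R_{N−1}R_{N−2}⋯R_m f_1, R_{N−1}R_{N−2}⋯R_n f_2⟩_{V_{h,N}} = δ_{n,m} · q^{−(N−n)(N+n+1)/2} (q;q)_{N−n} (A_h q^{2n+h};q)_{N−n} · ⟨f_1,f_2⟩_{V_{h,n}}, where δ_{n,m} is the Kronecker delta (products of consecutive raising operators, the empty product being the identity). -/

import Mathlib

open Finset

noncomputable section

/-- q-shifted factorial `(a;q)_m`. -/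
def qPoch (q a : ℝ) (m : ℕ) : ℝ := ∏ k ∈ Finset.range m, (1 - a * q ^ k)

/-- Partial sum `X_k = x_1 + ⋯ + x_k` (entries of index `< k`, 0-indexed). -/
def Xlt {h : ℕ} (x : Fin h → ℕ) (k : ℕ) : ℕ := ∑ j : Fin h, if (j : ℕ) < k then x j else 0

/-- Partial product `A_k = α_1 ⋯ α_k` (entries of index `< k`, 0-indexed). -/
def Apar {h : ℕ} (α : Fin h → ℝ) (k : ℕ) : ℝ := ∏ j : Fin h, if (j : ℕ) < k then α j else 1

/-- Raising operator `R_N : V_{h,N} → V_{h,N+1}`. -/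
def Rop (q : ℝ) {h : ℕ} (N : ℕ) (f : (Fin h → ℕ) → ℂ) : (Fin h → ℕ) → ℂ := fun x =>
  ∑ i : Fin h, (q : ℂ) ^ ((Xlt x i : ℤ) - N - 1) * (1 - (q : ℂ) ^ (x i)) *
    f (Function.update x i (x i - 1))

/-- Lowering operator `L_N : V_{h,N} → V_{h,N-1}` (its defining formula does not involve `N`). -/
def Lop (q : ℝ) {h : ℕ} (α : Fin h → ℝ) (f : (Fin h → ℕ) → ℂ) : (Fin h → ℕ) → ℂ := fun x =>
  ∑ j : Fin h, ((Apar α j : ℝ) : ℂ) * (q : ℂ) ^ ((j : ℕ) + Xlt x j) *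
    ((α j : ℂ) * (q : ℂ) ^ (x j + 1) - 1) * f (Function.update x j (x j + 1))

/-- The multidimensional q-Hahn operator `D_N : V_{h,N} → V_{h,N}`. -/
def Dop (q : ℝ) {h : ℕ} (α : Fin h → ℝ) (N : ℕ) (f : (Fin h → ℕ) → ℂ) : (Fin h → ℕ) → ℂ :=
  fun x =>
    (∑ i : Fin h, ∑ j : Fin h,
      if i ≠ j then
        ((Apar α j : ℝ) : ℂ) *
          (q : ℂ) ^ ((((j : ℕ) + Xlt x j + Xlt x i : ℕ) : ℤ) - N -
            (if (i : ℕ) < (j : ℕ) then 1 else 0)) *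
          ((α j : ℂ) * (q : ℂ) ^ (x j + 1) - 1) * (1 - (q : ℂ) ^ (x i)) *
          f (Function.update (Function.update x j (x j + 1)) i (x i - 1))
      else 0)
    + ((∑ j : Fin h,
          ((Apar α j : ℝ) : ℂ) * (q : ℂ) ^ ((((j : ℕ) + 2 * Xlt x j : ℕ) : ℤ) - N) *
            ((α j : ℂ) * (q : ℂ) ^ (x j) - 1) * (1 - (q : ℂ) ^ (x j)))
        + (((Apar α h : ℝ) : ℂ) * (q : ℂ) ^ (((h + N : ℕ) : ℤ) - 1) - 1) *
            (1 - (q : ℂ) ^ (-(N : ℤ)))) * f x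

/-- Scalar product on `V_{h,N}`. -/
def innerV (q : ℝ) {h : ℕ} (α : Fin h → ℝ) (N : ℕ) (f g : (Fin h → ℕ) → ℂ) : ℂ :=
  (q : ℂ) ^ (N * (N + 1) / 2) *
    ∑ x ∈ Finset.Nat.antidiagonalTuple h N,
      (∏ i : Fin h, ((qPoch q (q * α i) (x i) / qPoch q q (x i) : ℝ) : ℂ) *
        ((α i * q : ℝ) : ℂ) ^ ((N : ℤ) - Xlt x ((i : ℕ) + 1))) *
      f x * (starRingEnd ℂ) (g x)

/-- `RopIter q n k f = R_{n+k-1} ⋯ R_{n+1} R_n f`. -/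
def RopIter (q : ℝ) {h : ℕ} (n : ℕ) : ℕ → ((Fin h → ℕ) → ℂ) → ((Fin h → ℕ) → ℂ)
  | 0, f => f
  | k + 1, f => Rop q (n + k) (RopIter q n k f)

/-! ### Auxiliary machinery for the proof -/

/-- The weight in the scalar product. -/
def Wt (q : ℝ) {h : ℕ} (α : Fin h → ℝ) (N : ℕ) (x : Fin h → ℕ) : ℂ :=
  ∏ i : Fin h, ((qPoch q (q * α i) (x i) / qPoch q q (x i) : ℝ) : ℂ) *
    ((α i * q : ℝ) : ℂ) ^ ((N : ℤ) - Xlt x ((i : ℕ) + 1))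

lemma innerV_eq (q : ℝ) {h : ℕ} (α : Fin h → ℝ) (N : ℕ) (f g : (Fin h → ℕ) → ℂ) :
    innerV q α N f g = (q : ℂ) ^ (N * (N + 1) / 2) *
      ∑ x ∈ Finset.Nat.antidiagonalTuple h N, Wt q α N x * f x * (starRingEnd ℂ) (g x) := rfl

/-- The commutator scalar `c_S`. -/
def cB (q : ℝ) {h : ℕ} (α : Fin h → ℝ) (S : ℕ) : ℂ :=
  -(1 - (q : ℂ)) * (q : ℂ) ^ (-(S : ℤ) - 1) *
    (1 - ((Apar α h : ℝ) : ℂ) * (q : ℂ) ^ (2 * S + h))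

/-- The eigenvalue `μ_k` (with base level `n`). -/
def muB (q : ℝ) {h : ℕ} (α : Fin h → ℝ) (n k : ℕ) : ℂ :=
  ∑ j ∈ Finset.range k, cB q α (n + j)

section Aux

variable {q : ℝ} {h : ℕ} {α : Fin h → ℝ}

lemma Xlt_zero (x : Fin h → ℕ) : Xlt x 0 = 0 := by simp [Xlt]

lemma Xlt_top (x : Fin h → ℕ) : Xlt x h = ∑ i, x i := by simp [Xlt, Fin.is_lt]

lemma Xlt_succ (x : Fin h → ℕ) {m : ℕ} (hm : m < h) :
    Xlt x (m + 1) = Xlt x m + x ⟨m, hm⟩ := by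
  unfold Xlt
  have key : ∀ j : Fin h, (if (j : ℕ) < m + 1 then x j else 0) =
      (if (j : ℕ) < m then x j else 0) + (if j = ⟨m, hm⟩ then x j else 0) := by
    intro j
    by_cases hj : (j : ℕ) = m
    · have hje : j = ⟨m, hm⟩ := Fin.ext hj
      simp [hje]
    · by_cases hj2 : (j : ℕ) < m
      · simp [hj2, Nat.lt_succ_of_lt hj2, Fin.ext_iff, hj]
      · have h3 : ¬ (j : ℕ) < m + 1 := by omega
        simp [h3, hj2, Fin.ext_iff, hj]
  rw [Finset.sum_congr rfl fun j _ => key j, Finset.sum_add_distrib,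
    Finset.sum_ite_eq' univ (⟨m, hm⟩ : Fin h) (fun j => x j)]
  simp

lemma Apar_zero : Apar α 0 = 1 := by simp [Apar]

lemma Apar_top : Apar α h = ∏ i, α i := by simp [Apar, Fin.is_lt]

lemma Apar_succ {m : ℕ} (hm : m < h) : Apar α (m + 1) = Apar α m * α ⟨m, hm⟩ := by
  unfold Apar
  have key : ∀ j : Fin h, (if (j : ℕ) < m + 1 then α j else 1) =
      (if (j : ℕ) < m then α j else 1) * (if j = ⟨m, hm⟩ then α j else 1) := by
    intro j
    by_cases hj : (j : ℕ) = m
    · have hje : j = ⟨m, hm⟩ := Fin.ext hj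
      simp [hje]
    · by_cases hj2 : (j : ℕ) < m
      · simp [hj2, Nat.lt_succ_of_lt hj2, Fin.ext_iff, hj]
      · have h3 : ¬ (j : ℕ) < m + 1 := by omega
        simp [h3, hj2, Fin.ext_iff, hj]
  rw [Finset.prod_congr rfl fun j _ => key j, Finset.prod_mul_distrib,
    Finset.prod_ite_eq' univ (⟨m, hm⟩ : Fin h) (fun j => α j)]
  simp

lemma prod_ite_pow {M : Type*} [CommMonoid M] (c : M) :
    ∀ {m : ℕ}, m ≤ h → (∏ k : Fin h, if (k : ℕ) < m then c else 1) = c ^ m := by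
  intro m
  induction m with
  | zero => intro _; simp
  | succ m ih =>
    intro hm
    have hmh : m < h := by omega
    have key : ∀ j : Fin h, (if (j : ℕ) < m + 1 then c else 1) =
        (if (j : ℕ) < m then c else 1) * (if j = ⟨m, hmh⟩ then c else 1) := by
      intro j
      by_cases hj : (j : ℕ) = m
      · have hje : j = ⟨m, hmh⟩ := Fin.ext hj
        simp [hje]
      · by_cases hj2 : (j : ℕ) < m
        · simp [hj2, Nat.lt_succ_of_lt hj2, Fin.ext_iff, hj]
        · have h3 : ¬ (j : ℕ) < m + 1 := by omega
          simp [h3, hj2, Fin.ext_iff, hj]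
    rw [Finset.prod_congr rfl fun j _ => key j, Finset.prod_mul_distrib,
      Finset.prod_ite_eq' univ (⟨m, hmh⟩ : Fin h) (fun _ => c), ih (by omega)]
    simp [pow_succ]

lemma Xlt_update (x : Fin h → ℕ) (i : Fin h) (k m : ℕ) :
    Xlt (Function.update x i k) m + (if (i : ℕ) < m then x i else 0) =
      Xlt x m + (if (i : ℕ) < m then k else 0) := by
  unfold Xlt
  have key : ∀ j : Fin h,
      (if (j : ℕ) < m then Function.update x i k j else 0) +
        (if j = i then (if (i : ℕ) < m then x i else 0) else 0) =
      (if (j : ℕ) < m then x j else 0) +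
        (if j = i then (if (i : ℕ) < m then k else 0) else 0) := by
    intro j
    by_cases hj : j = i
    · subst hj
      by_cases him : (j : ℕ) < m <;> simp [him, Nat.add_comm]
    · simp [Function.update_of_ne hj, hj]
  have h1 := Finset.sum_congr rfl fun j (_ : j ∈ univ) => key j
  rw [Finset.sum_add_distrib, Finset.sum_add_distrib,
    Finset.sum_ite_eq' univ i (fun _ => if (i : ℕ) < m then x i else 0),
    Finset.sum_ite_eq' univ i (fun _ => if (i : ℕ) < m then k else 0)] at h1
  simpa using h1

lemma le_Xlt (x : Fin h → ℕ) (i : Fin h) (m : ℕ) (him : (i : ℕ) < m) : x i ≤ Xlt x m := by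
  unfold Xlt
  have := Finset.single_le_sum (f := fun l : Fin h => if (l : ℕ) < m then x l else 0)
    (fun l _ => Nat.zero_le _) (Finset.mem_univ i)
  simpa [him] using this

lemma sum_update (x : Fin h → ℕ) (i : Fin h) (k : ℕ) :
    (∑ l, Function.update x i k l) + x i = (∑ l, x l) + k := by
  rw [Finset.sum_update_of_mem (Finset.mem_univ i), ← Finset.erase_eq,
    ← Finset.add_sum_erase _ x (Finset.mem_univ i)]
  ring

/-- Adjointness. -/
lemma adjointR (hq0 : 0 < q) (hq1 : q < 1) (hα : ∀ i, 0 < α i)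
    (N : ℕ) (f g : (Fin h → ℕ) → ℂ) :
    innerV q α (N + 1) (Rop q N f) g = - innerV q α N f (Lop q α g) := by
  have hq : (q : ℂ) ≠ 0 := by
    simp only [ne_eq, Complex.ofReal_eq_zero]; exact ne_of_gt hq0
  have h4 : ∀ mm : ℕ, (q : ℂ) ^ mm ≠ 0 := fun mm => pow_ne_zero _ hq
  have hPq : ∀ m : ℕ, 0 < qPoch q q m := by
    intro m
    apply Finset.prod_pos
    intro k _
    have hlt : q * q ^ k < 1 := by
      calc q * q ^ k = q ^ (k + 1) := by ring
      _ < 1 := pow_lt_one₀ (le_of_lt hq0) hq1 (Nat.succ_ne_zero k)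
    linarith
  have hone : ∀ m : ℕ, (1 : ℝ) - q ^ (m + 1) ≠ 0 := by
    intro m
    have : q ^ (m + 1) < 1 := pow_lt_one₀ (le_of_lt hq0) hq1 (Nat.succ_ne_zero m)
    linarith
  have haq : ∀ k : Fin h, ((α k * q : ℝ) : ℂ) ≠ 0 := by
    intro k
    simp only [ne_eq, Complex.ofReal_eq_zero]
    exact ne_of_gt (mul_pos (hα k) hq0)
  -- weight ratio
  have hW : ∀ (y : Fin h → ℕ) (i : Fin h),
      Wt q α (N + 1) (Function.update y i (y i + 1)) * ((1 - q ^ (y i + 1) : ℝ) : ℂ) =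
      Wt q α N y * ((1 - α i * q ^ (y i + 1) : ℝ) : ℂ) * ((Apar α (i : ℕ) : ℝ) : ℂ) *
        (q : ℂ) ^ (i : ℕ) := by
    intro y i
    have hP : (∏ k : Fin h, ((α k * q : ℝ) : ℂ) ^ (if (k : ℕ) < (i : ℕ) then 1 else 0)) =
        ((Apar α (i : ℕ) : ℝ) : ℂ) * (q : ℂ) ^ (i : ℕ) := by
      have e1 : ∀ k : Fin h, ((α k * q : ℝ) : ℂ) ^ (if (k : ℕ) < (i : ℕ) then 1 else 0) =
          (if (k : ℕ) < (i : ℕ) then ((α k : ℝ) : ℂ) else 1) *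
            (if (k : ℕ) < (i : ℕ) then (q : ℂ) else 1) := by
        intro k
        by_cases hk : (k : ℕ) < (i : ℕ) <;> simp [hk]
      rw [Finset.prod_congr rfl fun k _ => e1 k, Finset.prod_mul_distrib,
        prod_ite_pow (q : ℂ) (le_of_lt i.isLt)]
      congr 1
      rw [Apar]
      push_cast
      apply Finset.prod_congr rfl
      intro k _
      split <;> simp
    rw [show Wt q α (N + 1) (Function.update y i (y i + 1)) * ((1 - q ^ (y i + 1) : ℝ) : ℂ) =
        ∏ k : Fin h, ((((qPoch q (q * α k) (Function.update y i (y i + 1) k) /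
            qPoch q q (Function.update y i (y i + 1) k) : ℝ) : ℂ) *
          ((α k * q : ℝ) : ℂ) ^ (((N + 1 : ℕ) : ℤ) -
            Xlt (Function.update y i (y i + 1)) ((k : ℕ) + 1))) *
          (if k = i then ((1 - q ^ (y i + 1) : ℝ) : ℂ) else 1)) by
      rw [Finset.prod_mul_distrib, Finset.prod_ite_eq' Finset.univ i
        (fun _ => ((1 - q ^ (y i + 1) : ℝ) : ℂ))]
      simp [Wt]]
    rw [show Wt q α N y * ((1 - α i * q ^ (y i + 1) : ℝ) : ℂ) *
        ((Apar α (i : ℕ) : ℝ) : ℂ) * (q : ℂ) ^ (i : ℕ) =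
        ∏ k : Fin h, ((((qPoch q (q * α k) (y k) / qPoch q q (y k) : ℝ) : ℂ) *
          ((α k * q : ℝ) : ℂ) ^ ((N : ℤ) - Xlt y ((k : ℕ) + 1))) *
          (if k = i then ((1 - α i * q ^ (y i + 1) : ℝ) : ℂ) else 1) *
          ((α k * q : ℝ) : ℂ) ^ (if (k : ℕ) < (i : ℕ) then 1 else 0)) by
      rw [Finset.prod_mul_distrib, Finset.prod_mul_distrib, Finset.prod_ite_eq'
        Finset.univ i (fun _ => ((1 - α i * q ^ (y i + 1) : ℝ) : ℂ)), hP]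
      simp [Wt]
      ring]
    apply Finset.prod_congr rfl
    intro k _
    rcases eq_or_ne k i with rfl | hki
    · -- k = i
      simp only [if_pos rfl, Function.update_self]
      have hX : Xlt (Function.update y k (y k + 1)) ((k : ℕ) + 1) =
          Xlt y ((k : ℕ) + 1) + 1 := by
        have := Xlt_update y k (y k + 1) ((k : ℕ) + 1)
        simp only [if_pos (Nat.lt_succ_self (k : ℕ))] at this
        omega
      have hE : (((N + 1 : ℕ) : ℤ) - (Xlt y ((k : ℕ) + 1) + 1 : ℕ)) =
          ((N : ℤ) - Xlt y ((k : ℕ) + 1)) := by push_cast; ring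
      rw [hX, hE]
      have hpoch : ((qPoch q (q * α k) (y k + 1) / qPoch q q (y k + 1) : ℝ) : ℂ) *
          ((1 - q ^ (y k + 1) : ℝ) : ℂ) =
          ((qPoch q (q * α k) (y k) / qPoch q q (y k) : ℝ) : ℂ) *
            ((1 - α k * q ^ (y k + 1) : ℝ) : ℂ) := by
        rw [← Complex.ofReal_mul, ← Complex.ofReal_mul]
        congr 1
        rw [qPoch, Finset.prod_range_succ, ← qPoch]
        have hq2 : qPoch q q (y k + 1) = qPoch q q (y k) * (1 - q * q ^ (y k)) := by
          rw [qPoch, Finset.prod_range_succ, ← qPoch]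
        rw [hq2]
        have hnz1 : qPoch q q (y k) ≠ 0 := ne_of_gt (hPq (y k))
        have hnz2 : (1 : ℝ) - q * q ^ (y k) ≠ 0 := by
          have := hone (y k); rw [pow_succ] at this
          intro hcon; apply this; rw [← hcon]; ring
        field_simp
        ring
      calc ((qPoch q (q * α k) (y k + 1) / qPoch q q (y k + 1) : ℝ) : ℂ) *
            ((α k * q : ℝ) : ℂ) ^ ((N : ℤ) - Xlt y ((k : ℕ) + 1)) *
            ((1 - q ^ (y k + 1) : ℝ) : ℂ)
          = (((qPoch q (q * α k) (y k + 1) / qPoch q q (y k + 1) : ℝ) : ℂ) *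
              ((1 - q ^ (y k + 1) : ℝ) : ℂ)) *
              ((α k * q : ℝ) : ℂ) ^ ((N : ℤ) - Xlt y ((k : ℕ) + 1)) := by ring
        _ = (((qPoch q (q * α k) (y k) / qPoch q q (y k) : ℝ) : ℂ) *
              ((1 - α k * q ^ (y k + 1) : ℝ) : ℂ)) *
              ((α k * q : ℝ) : ℂ) ^ ((N : ℤ) - Xlt y ((k : ℕ) + 1)) := by rw [hpoch]
        _ = ((qPoch q (q * α k) (y k) / qPoch q q (y k) : ℝ) : ℂ) *
              ((α k * q : ℝ) : ℂ) ^ ((N : ℤ) - Xlt y ((k : ℕ) + 1)) *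
              ((1 - α k * q ^ (y k + 1) : ℝ) : ℂ) *
              ((α k * q : ℝ) : ℂ) ^ (if (k : ℕ) < (k : ℕ) then 1 else 0) := by
            simp; ring
    · -- k ≠ i
      simp only [if_neg hki, Function.update_of_ne hki]
      rw [mul_one]
      have hX := Xlt_update y i (y i + 1) ((k : ℕ) + 1)
      rcases Nat.lt_or_ge (k : ℕ) (i : ℕ) with hk2 | hk2
      · have hni : ¬ ((i : ℕ) < (k : ℕ) + 1) := by omega
        simp only [if_neg hni] at hX
        have hXe : Xlt (Function.update y i (y i + 1)) ((k : ℕ) + 1) =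
            Xlt y ((k : ℕ) + 1) := by omega
        rw [hXe, if_pos hk2, pow_one]
        have hEe : (((N + 1 : ℕ) : ℤ) - Xlt y ((k : ℕ) + 1)) =
            ((N : ℤ) - Xlt y ((k : ℕ) + 1)) + 1 := by push_cast; ring
        rw [hEe, zpow_add₀ (haq k), zpow_one]
        ring
      · have hii : (i : ℕ) < (k : ℕ) + 1 := by
          rcases Nat.lt_or_ge (i : ℕ) ((k : ℕ) + 1) with h' | h'
          · exact h'
          · omega
        simp only [if_pos hii] at hX
        have hXe : Xlt (Function.update y i (y i + 1)) ((k : ℕ) + 1) =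
            Xlt y ((k : ℕ) + 1) + 1 := by omega
        have hnk : ¬ ((k : ℕ) < (i : ℕ)) := by omega
        rw [hXe, if_neg hnk, pow_zero, mul_one]
        have hEe : (((N + 1 : ℕ) : ℤ) - (Xlt y ((k : ℕ) + 1) + 1 : ℕ)) =
            ((N : ℤ) - Xlt y ((k : ℕ) + 1)) := by push_cast; ring
        rw [hEe]
        ring
  -- the combined pointwise identity
  have wkey : ∀ (y : Fin h → ℕ) (i : Fin h),
      (q : ℂ) ^ ((N + 1) * (N + 1 + 1) / 2) * Wt q α (N + 1) (Function.update y i (y i + 1)) *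
        ((q : ℂ) ^ ((Xlt (Function.update y i (y i + 1)) i : ℤ) - N - 1) *
          (1 - (q : ℂ) ^ (Function.update y i (y i + 1) i))) =
      -((q : ℂ) ^ (N * (N + 1) / 2) * Wt q α N y *
        (((Apar α (i : ℕ) : ℝ) : ℂ) * (q : ℂ) ^ ((i : ℕ) + Xlt y i) *
          ((α i : ℂ) * (q : ℂ) ^ (y i + 1) - 1))) := by
    intro y i
    have hXi : Xlt (Function.update y i (y i + 1)) i = Xlt y i := by
      have := Xlt_update y i (y i + 1) (i : ℕ)
      simp at this; omega
    have hyi : Function.update y i (y i + 1) i = y i + 1 := Function.update_self _ _ _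
    rw [hXi, hyi]
    have htri : (N + 1) * (N + 1 + 1) / 2 = N * (N + 1) / 2 + (N + 1) := by
      have : (N + 1) * (N + 1 + 1) = N * (N + 1) + 2 * (N + 1) := by ring
      omega
    have hWyi := hW y i
    have hcast1 : ((1 - q ^ (y i + 1) : ℝ) : ℂ) = 1 - (q : ℂ) ^ (y i + 1) := by push_cast; ring
    have hcast2 : ((1 - α i * q ^ (y i + 1) : ℝ) : ℂ) =
        1 - (α i : ℂ) * (q : ℂ) ^ (y i + 1) := by push_cast; ring
    rw [hcast1, hcast2] at hWyi
    have hmain : (q : ℂ) ^ ((N + 1) * (N + 1 + 1) / 2) *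
        (Wt q α (N + 1) (Function.update y i (y i + 1)) * (1 - (q : ℂ) ^ (y i + 1))) *
        (q : ℂ) ^ ((Xlt y i : ℤ) - N - 1) =
        (q : ℂ) ^ ((N + 1) * (N + 1 + 1) / 2) *
        (Wt q α N y * (1 - (α i : ℂ) * (q : ℂ) ^ (y i + 1)) *
          ((Apar α (i : ℕ) : ℝ) : ℂ) * (q : ℂ) ^ (i : ℕ)) *
        (q : ℂ) ^ ((Xlt y i : ℤ) - N - 1) := by rw [hWyi]
    calc (q : ℂ) ^ ((N + 1) * (N + 1 + 1) / 2) *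
          Wt q α (N + 1) (Function.update y i (y i + 1)) *
          ((q : ℂ) ^ ((Xlt y i : ℤ) - N - 1) * (1 - (q : ℂ) ^ (y i + 1)))
        = (q : ℂ) ^ ((N + 1) * (N + 1 + 1) / 2) *
          (Wt q α (N + 1) (Function.update y i (y i + 1)) * (1 - (q : ℂ) ^ (y i + 1))) *
          (q : ℂ) ^ ((Xlt y i : ℤ) - N - 1) := by ring
      _ = (q : ℂ) ^ ((N + 1) * (N + 1 + 1) / 2) *
          (Wt q α N y * (1 - (α i : ℂ) * (q : ℂ) ^ (y i + 1)) *
            ((Apar α (i : ℕ) : ℝ) : ℂ) * (q : ℂ) ^ (i : ℕ)) *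
          (q : ℂ) ^ ((Xlt y i : ℤ) - N - 1) := hmain
      _ = -((q : ℂ) ^ (N * (N + 1) / 2) * Wt q α N y *
          (((Apar α (i : ℕ) : ℝ) : ℂ) * (q : ℂ) ^ ((i : ℕ) + Xlt y i) *
            ((α i : ℂ) * (q : ℂ) ^ (y i + 1) - 1))) := by
          rw [htri]
          simp only [sub_eq_add_neg, neg_add, neg_neg, zpow_add₀ hq, zpow_neg,
            zpow_one, zpow_natCast, pow_add]
          field_simp [h4]
          ring
  -- sum manipulations
  rw [innerV_eq, innerV_eq]
  rw [Finset.mul_sum]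
  have hsplit : ∑ x ∈ Finset.Nat.antidiagonalTuple h (N + 1),
      (q : ℂ) ^ ((N + 1) * (N + 1 + 1) / 2) *
        (Wt q α (N + 1) x * Rop q N f x * (starRingEnd ℂ) (g x)) =
      ∑ i : Fin h, ∑ x ∈ Finset.Nat.antidiagonalTuple h (N + 1),
        (q : ℂ) ^ ((N + 1) * (N + 1 + 1) / 2) * Wt q α (N + 1) x *
          ((q : ℂ) ^ ((Xlt x i : ℤ) - N - 1) * (1 - (q : ℂ) ^ (x i))) *
          f (Function.update x i (x i - 1)) * (starRingEnd ℂ) (g x) := by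
    rw [Finset.sum_comm]
    apply Finset.sum_congr rfl
    intro x _
    simp only [Rop, Finset.mul_sum, Finset.sum_mul]
    apply Finset.sum_congr rfl
    intro i _
    ring
  rw [hsplit]
  have hbij : ∀ i : Fin h, ∑ x ∈ Finset.Nat.antidiagonalTuple h (N + 1),
      (q : ℂ) ^ ((N + 1) * (N + 1 + 1) / 2) * Wt q α (N + 1) x *
        ((q : ℂ) ^ ((Xlt x i : ℤ) - N - 1) * (1 - (q : ℂ) ^ (x i))) *
        f (Function.update x i (x i - 1)) * (starRingEnd ℂ) (g x) =
      ∑ y ∈ Finset.Nat.antidiagonalTuple h N,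
        (q : ℂ) ^ ((N + 1) * (N + 1 + 1) / 2) *
          Wt q α (N + 1) (Function.update y i (y i + 1)) *
          ((q : ℂ) ^ ((Xlt (Function.update y i (y i + 1)) i : ℤ) - N - 1) *
            (1 - (q : ℂ) ^ (Function.update y i (y i + 1) i))) *
          f y * (starRingEnd ℂ) (g (Function.update y i (y i + 1))) := by
    intro i
    rw [← Finset.sum_filter_of_ne (p := fun x : Fin h → ℕ => x i ≠ 0) (by
      intro x _ hF
      intro hxi
      apply hF
      rw [hxi]
      simp)]
    apply Finset.sum_nbij' (i := fun x => Function.update x i (x i - 1))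
      (j := fun y => Function.update y i (y i + 1))
    · intro a ha
      simp only [Finset.mem_filter, Finset.Nat.mem_antidiagonalTuple] at ha ⊢
      have := sum_update a i (a i - 1)
      omega
    · intro a ha
      rw [Finset.Nat.mem_antidiagonalTuple] at ha
      simp only [Finset.mem_filter, Finset.Nat.mem_antidiagonalTuple]
      have := sum_update a i (a i + 1)
      constructor
      · omega
      · simp
    · intro a ha
      simp only [Finset.mem_filter] at ha
      funext l
      rcases eq_or_ne l i with rfl | hl
      · simp only [Function.update_self]
        omega
      · simp [Function.update_of_ne hl]
    · intro a _
      funext l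
      rcases eq_or_ne l i with rfl | hl
      · simp only [Function.update_self]
        omega
      · simp [Function.update_of_ne hl]
    · intro a ha
      simp only [Finset.mem_filter] at ha
      have h1 : Function.update (Function.update a i (a i - 1)) i
          (Function.update a i (a i - 1) i + 1) = a := by
        funext l
        rcases eq_or_ne l i with rfl | hl
        · simp only [Function.update_self]
          omega
        · simp [Function.update_of_ne hl]
      rw [h1]
  rw [Finset.sum_congr rfl fun i (_ : i ∈ Finset.univ) => hbij i]
  have hfin : ∀ i : Fin h, ∀ y ∈ Finset.Nat.antidiagonalTuple h N,
      (q : ℂ) ^ ((N + 1) * (N + 1 + 1) / 2) *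
        Wt q α (N + 1) (Function.update y i (y i + 1)) *
        ((q : ℂ) ^ ((Xlt (Function.update y i (y i + 1)) i : ℤ) - N - 1) *
          (1 - (q : ℂ) ^ (Function.update y i (y i + 1) i))) *
        f y * (starRingEnd ℂ) (g (Function.update y i (y i + 1))) =
      -((q : ℂ) ^ (N * (N + 1) / 2) * Wt q α N y *
        (((Apar α (i : ℕ) : ℝ) : ℂ) * (q : ℂ) ^ ((i : ℕ) + Xlt y i) *
          ((α i : ℂ) * (q : ℂ) ^ (y i + 1) - 1)) *
        f y * (starRingEnd ℂ) (g (Function.update y i (y i + 1)))) := by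
    intro i y _
    rw [← neg_mul, ← neg_mul, wkey y i]
  rw [Finset.sum_congr rfl fun i (_ : i ∈ Finset.univ) =>
    Finset.sum_congr rfl fun y hy => hfin i y hy]
  -- now the right-hand side
  have hRHS : -((q : ℂ) ^ (N * (N + 1) / 2) * ∑ x ∈ Finset.Nat.antidiagonalTuple h N,
      Wt q α N x * f x * (starRingEnd ℂ) (Lop q α g x)) =
      ∑ y ∈ Finset.Nat.antidiagonalTuple h N, ∑ i : Fin h,
        -((q : ℂ) ^ (N * (N + 1) / 2) * Wt q α N y *
          (((Apar α (i : ℕ) : ℝ) : ℂ) * (q : ℂ) ^ ((i : ℕ) + Xlt y i) *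
            ((α i : ℂ) * (q : ℂ) ^ (y i + 1) - 1)) *
          f y * (starRingEnd ℂ) (g (Function.update y i (y i + 1)))) := by
    rw [Finset.mul_sum, ← Finset.sum_neg_distrib]
    apply Finset.sum_congr rfl
    intro y _
    have expand : (starRingEnd ℂ) (Lop q α g y) = ∑ i : Fin h,
        ((Apar α (i : ℕ) : ℝ) : ℂ) * (q : ℂ) ^ ((i : ℕ) + Xlt y i) *
          ((α i : ℂ) * (q : ℂ) ^ (y i + 1) - 1) *
          (starRingEnd ℂ) (g (Function.update y i (y i + 1))) := by
      simp only [Lop, map_sum, map_mul, map_sub, map_one, map_pow, Complex.conj_ofReal]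
    rw [expand, Finset.mul_sum, Finset.mul_sum, ← Finset.sum_neg_distrib]
    apply Finset.sum_congr rfl
    intro i _
    ring
  rw [hRHS]
  exact Finset.sum_comm

set_option maxHeartbeats 1000000 in
/-- Commutation relation. -/
lemma commB (hq0 : 0 < q) (f : (Fin h → ℕ) → ℂ) (x : Fin h → ℕ) :
    Lop q α (Rop q (∑ i, x i) f) x =
      Rop q ((∑ i, x i) - 1) (Lop q α f) x + cB q α (∑ i, x i) * f x := by
  have hq : (q : ℂ) ≠ 0 := by
    simp only [ne_eq, Complex.ofReal_eq_zero]; exact ne_of_gt hq0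
  have h4 : ∀ mm : ℕ, (q : ℂ) ^ mm ≠ 0 := fun mm => pow_ne_zero _ hq
  set S := ∑ i, x i with hS
  have hxS : ∀ i : Fin h, x i ≤ S := fun i =>
    Finset.single_le_sum (fun l _ => Nat.zero_le (x l)) (Finset.mem_univ i)
  set u : ℕ → ℂ := fun t => (1 - (q : ℂ)) * (q : ℂ) ^ (-(S : ℤ)) *
    ((Apar α t : ℝ) : ℂ) * (q : ℂ) ^ ((t : ℤ) - 1 + 2 * (Xlt x t : ℤ)) with hu
  have key : ∀ j i : Fin h,
      ((Apar α j : ℝ) : ℂ) * (q : ℂ) ^ ((j : ℕ) + Xlt x j) *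
          ((α j : ℂ) * (q : ℂ) ^ (x j + 1) - 1) *
        ((q : ℂ) ^ ((Xlt (Function.update x j (x j + 1)) i : ℤ) - S - 1) *
          (1 - (q : ℂ) ^ (Function.update x j (x j + 1) i)) *
          f (Function.update (Function.update x j (x j + 1)) i
              (Function.update x j (x j + 1) i - 1))) =
      (q : ℂ) ^ ((Xlt x i : ℤ) - ((S - 1 : ℕ) : ℤ) - 1) * (1 - (q : ℂ) ^ (x i)) *
        (((Apar α j : ℝ) : ℂ) *
          (q : ℂ) ^ ((j : ℕ) + Xlt (Function.update x i (x i - 1)) j) *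
          ((α j : ℂ) * (q : ℂ) ^ (Function.update x i (x i - 1) j + 1) - 1) *
          f (Function.update (Function.update x i (x i - 1)) j
              (Function.update x i (x i - 1) j + 1))) +
      (if i = j then (u ((j : ℕ) + 1) - u (j : ℕ)) * f x else 0) := by
    intro j i
    rcases eq_or_ne i j with rfl | hij
    · rw [if_pos rfl]
      have hXy : Xlt (Function.update x i (x i + 1)) i = Xlt x i := by
        have := Xlt_update x i (x i + 1) i
        simp at this; omega
      have hXz : Xlt (Function.update x i (x i - 1)) i = Xlt x i := by
        have := Xlt_update x i (x i - 1) i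
        simp at this; omega
      have hA1 : Function.update (Function.update x i (x i + 1)) i
          (Function.update x i (x i + 1) i - 1) = x := by
        simp [Function.update_idem]
      have hXs : Xlt x ((i : ℕ) + 1) = Xlt x i + x i := Xlt_succ x i.isLt
      have hAs : Apar α ((i : ℕ) + 1) = Apar α (i : ℕ) * α i := Apar_succ i.isLt
      rcases Nat.eq_zero_or_pos (x i) with h0 | h1
      · have hA2 : (1 - (q : ℂ) ^ (x i)) = 0 := by rw [h0]; simp
        rw [hA2, mul_zero, zero_mul, zero_add, hA1, hXy, hu]
        simp only [Function.update_self, hAs, hXs, h0, Nat.add_zero, Nat.cast_add,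
          Nat.cast_one, Complex.ofReal_mul]
        simp only [two_mul, sub_eq_add_neg, neg_add, neg_neg, zpow_add₀ hq, zpow_neg,
          zpow_one, zpow_natCast, pow_add]
        field_simp [h4]
      · obtain ⟨s, hs⟩ : ∃ s, x i = s + 1 := ⟨x i - 1, by omega⟩
        have hA2 : Function.update (Function.update x i (x i - 1)) i
            (Function.update x i (x i - 1) i + 1) = x := by
          simp [Function.update_idem, hs]
        have hzj : Function.update x i (x i - 1) i = s := by simp [hs]
        have hSc : ((S - 1 : ℕ) : ℤ) = (S : ℤ) - 1 := by
          have := hxS i; omega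
        rw [hA1, hA2, hXy, hXz, hzj, hSc, hu]
        simp only [Function.update_self, hAs, hXs, hs, Nat.cast_add, Nat.cast_one,
          Complex.ofReal_mul]
        simp only [two_mul, sub_eq_add_neg, neg_add, neg_neg, zpow_add₀ hq, zpow_neg,
          zpow_one, zpow_natCast, pow_add]
        field_simp [h4]
        ring
    · rw [if_neg hij]
      have hji : j ≠ i := fun e => hij e.symm
      have hyi : Function.update x j (x j + 1) i = x i := Function.update_of_ne hij _ _
      have hzj : Function.update x i (x i - 1) j = x j := Function.update_of_ne hji _ _
      have hAA : Function.update (Function.update x j (x j + 1)) i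
          (Function.update x j (x j + 1) i - 1) =
          Function.update (Function.update x i (x i - 1)) j
            (Function.update x i (x i - 1) j + 1) := by
        rw [hyi, hzj, Function.update_comm hji]
      rcases Nat.eq_zero_or_pos (x i) with h0 | h1
      · rw [hyi, hzj, h0]
        simp
      · obtain ⟨s, hs⟩ : ∃ s, x i = s + 1 := ⟨x i - 1, by omega⟩
        have hS1 : 1 ≤ S := le_trans (by omega) (hxS i)
        have hSc : ((S - 1 : ℕ) : ℤ) = (S : ℤ) - 1 := by omega
        have hXyu := Xlt_update x j (x j + 1) i
        have hXzu := Xlt_update x i (x i - 1) j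
        rw [hAA, hyi, hzj, hSc]
        rcases Nat.lt_or_ge (j : ℕ) (i : ℕ) with hji2 | hji2
        · have hij2 : ¬ ((i : ℕ) < (j : ℕ)) := by omega
          simp only [if_pos hji2] at hXyu
          simp only [if_neg hij2] at hXzu
          have e1 : Xlt (Function.update x j (x j + 1)) i = Xlt x i + 1 := by omega
          have e2 : Xlt (Function.update x i (x i - 1)) j = Xlt x j := by omega
          rw [e1, e2]
          simp only [Nat.cast_add, Nat.cast_one]
          simp only [two_mul, sub_eq_add_neg, neg_add, neg_neg, zpow_add₀ hq, zpow_neg,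
            zpow_one, zpow_natCast, pow_add]
          field_simp [h4]
          ring
        · have hij2 : (i : ℕ) < (j : ℕ) := by
            rcases Nat.lt_or_ge (i : ℕ) (j : ℕ) with h' | h'
            · exact h'
            · exfalso; exact hij (Fin.ext (by omega))
          have hji3 : ¬ ((j : ℕ) < (i : ℕ)) := by omega
          simp only [if_neg hji3] at hXyu
          simp only [if_pos hij2] at hXzu
          have e1 : Xlt (Function.update x j (x j + 1)) i = Xlt x i := by omega
          have e2 : Xlt (Function.update x i (x i - 1)) j + 1 = Xlt x j := by omega
          have e2' : (Xlt (Function.update x i (x i - 1)) j : ℤ) = (Xlt x j : ℤ) - 1 := by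
            omega
          rw [e1]
          rw [show ((j : ℕ) + Xlt (Function.update x i (x i - 1)) j) =
            ((j : ℕ) + Xlt x j) - 1 by omega]
          have hjX : 1 ≤ (j : ℕ) + Xlt x j := by
            have := le_Xlt x i (j : ℕ) hij2
            omega
          rw [show (q : ℂ) ^ (((j : ℕ) + Xlt x j) - 1) =
            (q : ℂ) ^ ((((j : ℕ) + Xlt x j : ℕ) : ℤ) - 1) by
              rw [← zpow_natCast (q : ℂ) (((j : ℕ) + Xlt x j) - 1)]
              congr 1
              omega]
          simp only [Nat.cast_add, Nat.cast_one]
          simp only [two_mul, sub_eq_add_neg, neg_add, neg_neg, zpow_add₀ hq, zpow_neg,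
            zpow_one, zpow_natCast, pow_add]
          field_simp [h4]
          ring
  have hLHS : Lop q α (Rop q S f) x = ∑ j : Fin h, ((∑ i : Fin h,
      (q : ℂ) ^ ((Xlt x i : ℤ) - ((S - 1 : ℕ) : ℤ) - 1) * (1 - (q : ℂ) ^ (x i)) *
        (((Apar α j : ℝ) : ℂ) *
          (q : ℂ) ^ ((j : ℕ) + Xlt (Function.update x i (x i - 1)) j) *
          ((α j : ℂ) * (q : ℂ) ^ (Function.update x i (x i - 1) j + 1) - 1) *
          f (Function.update (Function.update x i (x i - 1)) j
              (Function.update x i (x i - 1) j + 1)))) +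
      (u ((j : ℕ) + 1) - u (j : ℕ)) * f x) := by
    simp only [Lop, Rop]
    apply Finset.sum_congr rfl
    intro j _
    rw [Finset.mul_sum]
    rw [Finset.sum_congr rfl fun i (_ : i ∈ Finset.univ) => key j i,
      Finset.sum_add_distrib, Finset.sum_ite_eq' Finset.univ j
        (fun _ => (u ((j : ℕ) + 1) - u (j : ℕ)) * f x)]
    simp
  rw [hLHS, Finset.sum_add_distrib]
  congr 1
  · rw [Finset.sum_comm, Rop]
    apply Finset.sum_congr rfl
    intro i _
    rw [Lop, Finset.mul_sum]
  · rw [← Finset.sum_mul]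
    congr 1
    rw [Fin.sum_univ_eq_sum_range (fun t => u (t + 1) - u t) h, Finset.sum_range_sub u h]
    rw [hu]
    simp only [Apar_zero, Xlt_zero, Xlt_top, ← hS, Apar_top]
    rw [cB]
    simp only [Nat.cast_ofNat, Nat.cast_zero, Complex.ofReal_one, Complex.ofReal_prod]
    rw [show 2 * S + h = S + (S + h) by ring]
    simp only [two_mul, sub_eq_add_neg, neg_add, neg_neg, zpow_add₀ hq, zpow_neg,
      zpow_one, zpow_natCast, pow_add, mul_zero, add_zero, zero_add, Nat.cast_zero]
    have hA : Apar α h = ∏ i, α i := Apar_top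
    field_simp [h4]
    rw [hA]
    push_cast
    ring

lemma adjointR_iter (hq0 : 0 < q) (hq1 : q < 1) (hα : ∀ i, 0 < α i)
    (m : ℕ) (f : (Fin h → ℕ) → ℂ) :
    ∀ (k : ℕ) (g : (Fin h → ℕ) → ℂ),
      innerV q α (m + k) (RopIter q m k f) g =
        (-1 : ℂ) ^ k * innerV q α m f ((Lop q α)^[k] g) := by
  intro k
  induction k with
  | zero => intro g; simp [RopIter]
  | succ k ih =>
    intro g
    have hR : RopIter q m (k + 1) f = Rop q (m + k) (RopIter q m k f) := rfl
    rw [show m + (k + 1) = (m + k) + 1 by omega, hR,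
      adjointR hq0 hq1 hα (m + k) _ g, ih (Lop q α g), Function.iterate_succ_apply]
    ring

lemma lower_iter_one (hq0 : 0 < q) (n : ℕ) (f₂ : (Fin h → ℕ) → ℂ)
    (h₂ : n = 0 ∨ ∀ x : Fin h → ℕ, (∑ i, x i) + 1 = n → Lop q α f₂ x = 0) :
    ∀ (t : ℕ) (x : Fin h → ℕ), (∑ i, x i) = n + t →
      Lop q α (RopIter q n (t + 1) f₂) x = muB q α n (t + 1) * RopIter q n t f₂ x := by
  intro t
  induction t with
  | zero =>
    intro x hx
    have hx' : ∑ i, x i = n := by omega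
    have hcomm := commB hq0 (α := α) f₂ x
    rw [hx'] at hcomm
    have he : RopIter q n 1 f₂ = Rop q n f₂ := rfl
    rw [he, hcomm]
    have hz : Rop q (n - 1) (Lop q α f₂) x = 0 := by
      rw [Rop]
      apply Finset.sum_eq_zero
      intro i _
      rcases Nat.eq_zero_or_pos (x i) with h0 | h1
      · rw [h0]; simp
      · rcases h₂ with h₂0 | h₂L
        · exfalso
          have : x i ≤ ∑ l, x l :=
            Finset.single_le_sum (fun l _ => Nat.zero_le (x l)) (Finset.mem_univ i)
          omega
        · rw [h₂L (Function.update x i (x i - 1)) (by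
            have := sum_update x i (x i - 1)
            omega), mul_zero]
    rw [hz, zero_add]
    have hmu : muB q α n 1 = cB q α n := by simp [muB]
    rw [hmu]
    rfl
  | succ t ih =>
    intro x hx
    have hcomm := commB hq0 (α := α) (RopIter q n (t + 1) f₂) x
    rw [hx] at hcomm
    have he : RopIter q n (t + 1 + 1) f₂ = Rop q (n + (t + 1)) (RopIter q n (t + 1) f₂) :=
      rfl
    rw [he, hcomm]
    have hidx : n + (t + 1) - 1 = n + t := by omega
    rw [hidx]
    have hR : Rop q (n + t) (Lop q α (RopIter q n (t + 1) f₂)) x =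
        muB q α n (t + 1) * Rop q (n + t) (RopIter q n t f₂) x := by
      rw [Rop, Rop, Finset.mul_sum]
      apply Finset.sum_congr rfl
      intro i _
      rcases Nat.eq_zero_or_pos (x i) with h0 | h1
      · rw [h0]; simp
      · rw [ih (Function.update x i (x i - 1)) (by
          have := sum_update x i (x i - 1)
          omega)]
        ring
    have he2 : Rop q (n + t) (RopIter q n t f₂) x = RopIter q n (t + 1) f₂ x := rfl
    rw [hR, he2]
    have hmu2 : muB q α n (t + 1 + 1) = muB q α n (t + 1) + cB q α (n + (t + 1)) := by
      rw [muB, Finset.sum_range_succ, ← muB]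
    rw [hmu2]
    ring

lemma lower_iter (hq0 : 0 < q) (n : ℕ) (f₂ : (Fin h → ℕ) → ℂ)
    (h₂ : n = 0 ∨ ∀ x : Fin h → ℕ, (∑ i, x i) + 1 = n → Lop q α f₂ x = 0) :
    ∀ (r k : ℕ), r ≤ k → ∀ x : Fin h → ℕ, (∑ i, x i) = n + (k - r) →
      (Lop q α)^[r] (RopIter q n k f₂) x =
        (∏ j ∈ Finset.range r, muB q α n (k - j)) * RopIter q n (k - r) f₂ x := by
  intro r
  induction r with
  | zero => intro k _ x _; simp
  | succ r ih =>
    intro k hrk x hx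
    rw [Function.iterate_succ_apply']
    have hL : Lop q α ((Lop q α)^[r] (RopIter q n k f₂)) x =
        Lop q α (fun y => (∏ j ∈ Finset.range r, muB q α n (k - j)) *
          RopIter q n (k - r) f₂ y) x := by
      unfold Lop
      apply Finset.sum_congr rfl
      intro j _
      congr 1
      apply ih k (by omega)
      have := sum_update x j (x j + 1)
      omega
    have hfac : Lop q α (fun y => (∏ j ∈ Finset.range r, muB q α n (k - j)) *
        RopIter q n (k - r) f₂ y) x =
        (∏ j ∈ Finset.range r, muB q α n (k - j)) *
          Lop q α (RopIter q n (k - r) f₂) x := by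
      unfold Lop
      rw [Finset.mul_sum]
      apply Finset.sum_congr rfl
      intro j _
      ring
    have hone : Lop q α (RopIter q n (k - r) f₂) x =
        muB q α n (k - r) * RopIter q n (k - (r + 1)) f₂ x := by
      have e : k - r = (k - (r + 1)) + 1 := by omega
      rw [e]
      exact lower_iter_one hq0 n f₂ h₂ (k - (r + 1)) x (by omega)
    rw [hL, hfac, hone, Finset.prod_range_succ]
    ring

lemma innerV_congr_right (N : ℕ) (f g g' : (Fin h → ℕ) → ℂ)
    (hgg : ∀ x : Fin h → ℕ, (∑ i, x i) = N → g x = g' x) :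
    innerV q α N f g = innerV q α N f g' := by
  unfold innerV
  congr 1
  apply Finset.sum_congr rfl
  intro x hx
  rw [Finset.Nat.mem_antidiagonalTuple] at hx
  rw [hgg x hx]

lemma innerV_conj (N : ℕ) (f g : (Fin h → ℕ) → ℂ) :
    innerV q α N f g = (starRingEnd ℂ) (innerV q α N g f) := by
  simp only [innerV, map_mul, map_sum, map_pow, map_prod, Complex.conj_conj,
    Complex.conj_ofReal, map_zpow₀]
  congr 1
  apply Finset.sum_congr rfl
  intro x _
  ring

lemma innerV_smul_right (N : ℕ) (c : ℂ) (f g : (Fin h → ℕ) → ℂ) :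
    innerV q α N f (fun x => c * g x) = (starRingEnd ℂ) c * innerV q α N f g := by
  simp only [innerV, map_mul, Finset.mul_sum]
  apply Finset.sum_congr rfl
  intro x _
  ring

lemma muB_conj (n k : ℕ) : (starRingEnd ℂ) (muB q α n k) = muB q α n k := by
  simp [muB, cB, map_sum, map_mul, map_sub, map_neg, map_one, map_zpow₀, map_pow,
    Complex.conj_ofReal]

lemma muB_closed (hq0 : 0 < q) (n : ℕ) : ∀ k : ℕ,
    muB q α n k = -(q : ℂ) ^ (-(n : ℤ) - k) * (1 - (q : ℂ) ^ (k : ℤ)) *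
      (1 - ((Apar α h : ℝ) : ℂ) * (q : ℂ) ^ (2 * (n : ℤ) + h + k - 1)) := by
  have hq : (q : ℂ) ≠ 0 := by
    simp only [ne_eq, Complex.ofReal_eq_zero]; exact ne_of_gt hq0
  intro k
  induction k with
  | zero => simp [muB]
  | succ k ih =>
    rw [muB, Finset.sum_range_succ, ← muB, ih, cB]
    rw [show 2 * (n + k) + h = n + (n + (k + (k + h))) by ring]
    simp only [two_mul, sub_eq_add_neg, neg_add, neg_neg, zpow_add₀ hq, zpow_neg, zpow_one,
      zpow_natCast, Nat.cast_add, Nat.cast_one, pow_add]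
    have h1 : (q : ℂ) ^ k ≠ 0 := pow_ne_zero _ hq
    have h2 : (q : ℂ) ^ n ≠ 0 := pow_ne_zero _ hq
    have h3 : (q : ℂ) ^ h ≠ 0 := pow_ne_zero _ hq
    field_simp
    ring

lemma mu_prod_aux (hq0 : 0 < q) (n : ℕ) : ∀ k : ℕ,
    (∏ j ∈ Finset.range k, (-(muB q α n (j + 1)))) =
      (q : ℂ) ^ (-((k * (2 * n + k + 1) / 2 : ℕ) : ℤ)) *
        ((qPoch q q k : ℝ) : ℂ) *
        ((qPoch q (Apar α h * q ^ (2 * n + h)) k : ℝ) : ℂ) := by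
  have hq : (q : ℂ) ≠ 0 := by
    simp only [ne_eq, Complex.ofReal_eq_zero]; exact ne_of_gt hq0
  intro k
  induction k with
  | zero => simp [qPoch]
  | succ k ih =>
    rw [Finset.prod_range_succ, ih, muB_closed hq0 n (k + 1)]
    have ed : ((k + 1) * (2 * n + (k + 1) + 1) / 2 : ℕ) =
        (k * (2 * n + k + 1) / 2 : ℕ) + (n + k + 1) := by
      have : (k + 1) * (2 * n + (k + 1) + 1) = k * (2 * n + k + 1) + 2 * (n + k + 1) := by
        ring
      omega
    have eP1 : ((qPoch q q (k + 1) : ℝ) : ℂ) =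
        ((qPoch q q k : ℝ) : ℂ) * (1 - (q : ℂ) * (q : ℂ) ^ (k : ℕ)) := by
      rw [qPoch, Finset.prod_range_succ, ← qPoch]
      push_cast
      ring
    have eP2 : ((qPoch q (Apar α h * q ^ (2 * n + h)) (k + 1) : ℝ) : ℂ) =
        ((qPoch q (Apar α h * q ^ (2 * n + h)) k : ℝ) : ℂ) *
          (1 - ((Apar α h : ℝ) : ℂ) * (q : ℂ) ^ (2 * n + h) * (q : ℂ) ^ (k : ℕ)) := by
      rw [qPoch, Finset.prod_range_succ, ← qPoch]
      push_cast
      ring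
    rw [ed, eP1, eP2]
    rw [show 2 * n + h = n + (n + h) by ring]
    simp only [two_mul, sub_eq_add_neg, neg_add, neg_neg, zpow_add₀ hq, zpow_neg, zpow_one,
      zpow_natCast, Nat.cast_add, Nat.cast_one, Nat.cast_mul, pow_add]
    have h1 : (q : ℂ) ^ k ≠ 0 := pow_ne_zero _ hq
    have h2 : (q : ℂ) ^ n ≠ 0 := pow_ne_zero _ hq
    have h3 : (q : ℂ) ^ h ≠ 0 := pow_ne_zero _ hq
    have h4 : ∀ mm : ℕ, (q : ℂ) ^ mm ≠ 0 := fun mm => pow_ne_zero _ hq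
    field_simp [h4]

lemma mu_prod (hq0 : 0 < q) (n : ℕ) (k : ℕ) :
    (-1 : ℂ) ^ k * (∏ j ∈ Finset.range k, muB q α n (k - j)) =
      (q : ℂ) ^ (-((k * (2 * n + k + 1) / 2 : ℕ) : ℤ)) *
        ((qPoch q q k : ℝ) : ℂ) *
        ((qPoch q (Apar α h * q ^ (2 * n + h)) k : ℝ) : ℂ) := by
  have hrefl : ∏ j ∈ Finset.range k, muB q α n (k - j) =
      ∏ j ∈ Finset.range k, muB q α n (j + 1) := by
    rw [← Finset.prod_range_reflect (fun j => muB q α n (j + 1)) k]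
    apply Finset.prod_congr rfl
    intro j hj
    rw [Finset.mem_range] at hj
    congr 1
    omega
  have hneg : (∏ j ∈ Finset.range k, (-(muB q α n (j + 1)))) =
      (-1 : ℂ) ^ k * ∏ j ∈ Finset.range k, muB q α n (j + 1) := by
    rw [Finset.prod_congr rfl fun j (_ : j ∈ Finset.range k) =>
        (neg_eq_neg_one_mul (muB q α n (j + 1))), Finset.prod_mul_distrib,
      Finset.prod_const, Finset.card_range]
  rw [hrefl, ← hneg, mu_prod_aux hq0 n k]


end Aux

theorem stmt5 (q : ℝ) (hq0 : 0 < q) (hq1 : q < 1) (h : ℕ) (hh : 1 ≤ h)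
    (α : Fin h → ℝ) (hα : ∀ i, 0 < α i) (n m N : ℕ) (hnm : n ≤ m) (hmN : m ≤ N)
    (f₁ f₂ : (Fin h → ℕ) → ℂ)
    (h₁ : m = 0 ∨ ∀ x : Fin h → ℕ, (∑ i, x i) + 1 = m → Lop q α f₁ x = 0)
    (h₂ : n = 0 ∨ ∀ x : Fin h → ℕ, (∑ i, x i) + 1 = n → Lop q α f₂ x = 0) :
    innerV q α N (RopIter q m (N - m) f₁) (RopIter q n (N - n) f₂) =
      (if n = m then 1 else 0) * (q : ℂ) ^ (-(((N - n) * (N + n + 1) / 2 : ℕ) : ℤ)) *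
        ((qPoch q q (N - n) : ℝ) : ℂ) *
        ((qPoch q (Apar α h * q ^ (2 * n + h)) (N - n) : ℝ) : ℂ) *
        innerV q α n f₁ f₂ := by
  rcases eq_or_lt_of_le hnm with rfl | hlt
  · -- n = m
    set k := N - n with hk
    have hN : N = n + k := by omega
    have e1 : innerV q α N (RopIter q n k f₁) (RopIter q n k f₂) =
        (-1 : ℂ) ^ k * innerV q α n f₁ ((Lop q α)^[k] (RopIter q n k f₂)) := by
      rw [hN]; exact adjointR_iter hq0 hq1 hα n f₁ k _
    have e2 : innerV q α n f₁ ((Lop q α)^[k] (RopIter q n k f₂)) =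
        innerV q α n f₁ (fun x => (∏ j ∈ Finset.range k, muB q α n (k - j)) * f₂ x) := by
      apply innerV_congr_right
      intro x hx
      have := lower_iter hq0 n f₂ h₂ k k le_rfl x (by omega)
      simpa [RopIter] using this
    rw [e1, e2, innerV_smul_right, if_pos rfl]
    have hconj : (starRingEnd ℂ) (∏ j ∈ Finset.range k, muB q α n (k - j)) =
        ∏ j ∈ Finset.range k, muB q α n (k - j) := by
      rw [map_prod]; exact Finset.prod_congr rfl fun j _ => muB_conj _ _
    rw [hconj]
    have hmp := mu_prod (α := α) hq0 n k
    have hNn : N + n + 1 = 2 * n + k + 1 := by omega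
    rw [hNn, ← mul_assoc, hmp]
    ring
  · -- n < m
    obtain ⟨m', rfl⟩ : ∃ m', m = m' + 1 := ⟨m - 1, by omega⟩
    rw [if_neg (by omega)]
    set k₁ := N - (m' + 1) with hk1
    set k₂ := N - n with hk2
    have hN : N = (m' + 1) + k₁ := by omega
    have e1 : innerV q α N (RopIter q (m' + 1) k₁ f₁) (RopIter q n k₂ f₂) =
        (-1 : ℂ) ^ k₁ *
          innerV q α (m' + 1) f₁ ((Lop q α)^[k₁] (RopIter q n k₂ f₂)) := by
      rw [hN]; exact adjointR_iter hq0 hq1 hα (m' + 1) f₁ k₁ _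
    have hr : k₁ ≤ k₂ := by omega
    have e2 : innerV q α (m' + 1) f₁ ((Lop q α)^[k₁] (RopIter q n k₂ f₂)) =
        innerV q α (m' + 1) f₁ (fun x =>
          (∏ j ∈ Finset.range k₁, muB q α n (k₂ - j)) * RopIter q n (k₂ - k₁) f₂ x) := by
      apply innerV_congr_right
      intro x hx
      exact lower_iter hq0 n f₂ h₂ k₁ k₂ hr x (by omega)
    have hstep : RopIter q n (k₂ - k₁) f₂ = Rop q m' (RopIter q n (m' - n) f₂) := by
      rw [show k₂ - k₁ = (m' - n) + 1 by omega]
      show Rop q (n + (m' - n)) _ = _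
      rw [show n + (m' - n) = m' by omega]
    have e3 : innerV q α (m' + 1) f₁ (RopIter q n (k₂ - k₁) f₂) = 0 := by
      rw [innerV_conj, hstep, adjointR hq0 hq1 hα m' _ f₁]
      have hz : innerV q α m' (RopIter q n (m' - n) f₂) (Lop q α f₁) = 0 := by
        rw [innerV_eq]
        have hzz : ∀ x ∈ Finset.Nat.antidiagonalTuple h m',
            Wt q α m' x * RopIter q n (m' - n) f₂ x *
              (starRingEnd ℂ) (Lop q α f₁ x) = 0 := by
          intro x hx
          rw [Finset.Nat.mem_antidiagonalTuple] at hx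
          rcases h₁ with h0 | hL
          · omega
          · rw [hL x (by omega), map_zero, mul_zero]
        rw [Finset.sum_eq_zero hzz, mul_zero]
      rw [hz, neg_zero, map_zero]
    rw [e1, e2, innerV_smul_right, e3, mul_zero, mul_zero]
    ring

end
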